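/- arXiv:math/0611251 — 2 statements merged into one kernel-verified Lean document; each statement's English description precedes it below -/
import Mathlib

section
/- Let G be a locally compact Hausdorff groupoid with left Haar system. Then G is integrable if and only if for each z ∈ G⁰ there exists an open neighborhood U of z in G⁰ such that sup_{x∈U} λ^x(s⁻¹(U)) < ∞. -/
open MeasureTheory Filter Topology ENNReal Classical

/-- A topological groupoid, given by range/source maps, a (total) partial-multiplication
`mul` (only meaningful on composable pairs, i.e. when `s γ = r α`) and inversion. -/
structure TopGroupoid (G : Type*) [TopologicalSpace G] where
  r : G → G
  s : G → G
  mul : G → G → G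
  inv : G → G
  r_mul : ∀ γ α, s γ = r α → r (mul γ α) = r γ
  s_mul : ∀ γ α, s γ = r α → s (mul γ α) = s α
  mul_assoc' : ∀ γ α β, s γ = r α → s α = r β → mul (mul γ α) β = mul γ (mul α β)
  r_inv : ∀ γ, r (inv γ) = s γ
  s_inv : ∀ γ, s (inv γ) = r γ
  inv_inv' : ∀ γ, inv (inv γ) = γ
  mul_inv' : ∀ γ, mul γ (inv γ) = r γ
  inv_mul' : ∀ γ, mul (inv γ) γ = s γ
  unit_mul : ∀ γ, mul (r γ) γ = γ
  mul_unit : ∀ γ, mul γ (s γ) = γ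
  continuous_r : Continuous r
  continuous_s : Continuous s
  continuous_inv : Continuous inv
  continuous_mul : ContinuousOn (fun p : G × G => mul p.1 p.2) {p | s p.1 = r p.2}

namespace TopGroupoid

variable {G : Type*} [TopologicalSpace G] (Gd : TopGroupoid G)

/-- The unit space `G⁰` of the groupoid. -/
def units : Set G := Set.range Gd.r

/-- The orbit `[z] = r(s⁻¹{z})` of a unit `z`. -/
def orbit (z : G) : Set G := Gd.r '' (Gd.s ⁻¹' {z})

/-- A groupoid is principal if `γ ↦ (r γ, s γ)` is injective. -/
def Principal : Prop := Function.Injective (fun γ => (Gd.r γ, Gd.s γ))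

/-- Product of two subsets of the groupoid: all products of composable pairs. -/
def setMul (A B : Set G) : Set G :=
  {x | ∃ γ ∈ A, ∃ α ∈ B, Gd.s γ = Gd.r α ∧ x = Gd.mul γ α}

/-- Powers of a subset with respect to `setMul`; `A ^ 1 = A`. -/
def setPow (A : Set G) : ℕ → Set G
  | 0 => Gd.units
  | n+1 => Gd.setMul A (setPow A n)

/-- A set `W ⊆ G` is conditionally compact if `WV` and `VW` are relatively compact
for every compact `V ⊆ G`. -/
def CondCompact (W : Set G) : Prop :=
  ∀ V : Set G, IsCompact V →
    IsCompact (closure (Gd.setMul W V)) ∧ IsCompact (closure (Gd.setMul V W))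

/-- A sequence `x : ℕ → G` (in the unit space) converges `k`-times in `G⁰/G` to `z`. -/
def ConvergesKTimes (x : ℕ → G) (z : G) (k : ℕ) : Prop :=
  ∃ γ : Fin k → ℕ → G,
    (∀ i n, Gd.s (γ i n) = x n) ∧
    (∀ i, Tendsto (fun n => Gd.r (γ i n)) atTop (𝓝 z)) ∧
    (∀ i j : Fin k, i < j →
      Tendsto (fun n => Gd.mul (γ j n) (Gd.inv (γ i n))) atTop (cocompact G))

end TopGroupoid

/-- A left Haar system on a topological groupoid: a family of Radon measures `λˣ`
with support `r⁻¹{x}`, continuous in `x`, and left invariant. -/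
structure HaarSystem {G : Type*} [TopologicalSpace G] [MeasurableSpace G]
    (Gd : TopGroupoid G) where
  lam : G → Measure G
  regular : ∀ x, (lam x).Regular
  supp_subset : ∀ x ∈ Gd.units, lam x {γ | Gd.r γ ≠ x} = 0
  supp_full : ∀ x ∈ Gd.units, ∀ U : Set G, IsOpen U →
      (U ∩ Gd.r ⁻¹' {x}).Nonempty → 0 < lam x U
  continuous_int : ∀ f : G → ℝ, Continuous f → HasCompactSupport f →
      Continuous fun x => ∫ γ, f γ ∂(lam x)
  left_invariant : ∀ γ : G, ∀ f : G → ℝ, Continuous f → HasCompactSupport f →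
      ∫ α, f (Gd.mul γ α) ∂(lam (Gd.s γ)) = ∫ α, f α ∂(lam (Gd.r γ))

namespace HaarSystem

variable {G : Type*} [TopologicalSpace G] [MeasurableSpace G]
  {Gd : TopGroupoid G} (HS : HaarSystem Gd)

/-- The associated right Haar system `λ_x(E) = λˣ(E⁻¹)`, supported on `s⁻¹{x}`. -/
noncomputable def rlam (x : G) : Measure G := (HS.lam x).map Gd.inv

/-- The groupoid (with its Haar system) is integrable if
`sup_{x ∈ N} λˣ(s⁻¹ N) < ∞` for every compact `N ⊆ G⁰`. -/
def Integrable : Prop :=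
  ∀ N : Set G, N ⊆ Gd.units → IsCompact N →
    (⨆ x ∈ N, HS.lam x (Gd.s ⁻¹' N)) < ⊤

/-- `G` fails to be integrable at `z` if `sup_{x ∈ U} λˣ(s⁻¹ U) = ∞` for every open
neighborhood `U` of `z` in `G⁰`. -/
def FailsIntegrableAt (z : G) : Prop :=
  ∀ U : Set G, IsOpen U → z ∈ U →
    (⨆ x ∈ U ∩ Gd.units, HS.lam x (Gd.s ⁻¹' (U ∩ Gd.units))) = ⊤

end HaarSystem

namespace TopGroupoid
variable {G : Type*} [TopologicalSpace G] (Gd : TopGroupoid G)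

lemma s_r' (γ : G) : Gd.s (Gd.r γ) = Gd.r γ := by
  have h := Gd.s_mul γ (Gd.inv γ) (Gd.r_inv γ).symm
  rw [Gd.mul_inv', Gd.s_inv] at h
  exact h

lemma r_r' (γ : G) : Gd.r (Gd.r γ) = Gd.r γ := by
  have h := Gd.r_mul γ (Gd.inv γ) (Gd.r_inv γ).symm
  rw [Gd.mul_inv'] at h
  exact h

lemma units_eq' : Gd.units = {x | Gd.r x = x} := by
  ext x
  constructor
  · rintro ⟨γ, rfl⟩; exact Gd.r_r' γ
  · intro hx; exact ⟨x, hx⟩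

lemma s_mem_units' (γ : G) : Gd.s γ ∈ Gd.units := by
  rw [← Gd.r_inv γ]; exact ⟨_, rfl⟩

lemma isClosed_units' [T2Space G] : IsClosed Gd.units := by
  rw [Gd.units_eq']
  exact isClosed_eq Gd.continuous_r continuous_id

end TopGroupoid

namespace HaarSystem

variable {G : Type*} [TopologicalSpace G] [T2Space G] [LocallyCompactSpace G]
  [MeasurableSpace G] [BorelSpace G]
  {Gd : TopGroupoid G} (HS : HaarSystem Gd)

/-- The measure `λˣ` only charges `r⁻¹{x}`. -/
lemma measure_eq_inter_fiber {x : G} (hx : x ∈ Gd.units) (A : Set G) :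
    HS.lam x A = HS.lam x (A ∩ Gd.r ⁻¹' {x}) := by
  refine le_antisymm ?_ (measure_mono Set.inter_subset_left)
  calc HS.lam x A ≤ HS.lam x ((A ∩ Gd.r ⁻¹' {x}) ∪ {γ | Gd.r γ ≠ x}) := by
        refine measure_mono fun γ hγ => ?_
        by_cases hg : Gd.r γ = x
        · exact Or.inl ⟨hγ, hg⟩
        · exact Or.inr hg
    _ ≤ HS.lam x (A ∩ Gd.r ⁻¹' {x}) + HS.lam x {γ | Gd.r γ ≠ x} := measure_union_le _ _
    _ = HS.lam x (A ∩ Gd.r ⁻¹' {x}) := by rw [HS.supp_subset x hx, add_zero]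

/-- Key invariance-type estimate: if `γ` has range `x` and source `y`, and
`λʸ(s⁻¹ V) < ∞` for an open `V`, then `λˣ(s⁻¹ V) ≤ λʸ(s⁻¹ V)`. -/
lemma measure_source_le {x y : G} (γ : G) (hr : Gd.r γ = x) (hs : Gd.s γ = y)
    (V : Set G) (hV : IsOpen V) (hfin : HS.lam y (Gd.s ⁻¹' V) ≠ ⊤) :
    HS.lam x (Gd.s ⁻¹' V) ≤ HS.lam y (Gd.s ⁻¹' V) := by
  have hregx := HS.regular x
  have hregy := HS.regular y
  haveI : (HS.lam x).Regular := hregx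
  haveI : (HS.lam y).Regular := hregy
  -- reduce to compact subsets by inner regularity
  by_contra hlt
  push_neg at hlt
  obtain ⟨K, hKV, hK, hKgt⟩ :=
    Measure.Regular.innerRegular (μ := HS.lam x) (Gd.continuous_s.isOpen_preimage V hV)
      _ hlt
  -- Urysohn function
  obtain ⟨f, hf1, hf0, hfc, hf01⟩ :=
    exists_continuous_one_zero_of_isCompact hK
      (Gd.continuous_s.isOpen_preimage V hV).isClosed_compl
      (Set.disjoint_compl_right_iff_subset.mpr hKV)
  -- λˣ K ≤ ∫ f dλˣ
  have hKmeas : MeasurableSet K := hK.isClosed.measurableSet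
  have hKfin : HS.lam x K ≠ ⊤ := hK.measure_lt_top.ne
  have hintf : MeasureTheory.Integrable f (HS.lam x) :=
    f.continuous.integrable_of_hasCompactSupport hfc
  have hind : MeasureTheory.Integrable (K.indicator (fun _ => (1:ℝ))) (HS.lam x) := by
    rw [integrable_indicator_iff hKmeas]
    exact integrableOn_const hK.measure_lt_top.ne (by simp)
  have h1 : (HS.lam x K).toReal ≤ ∫ α, f α ∂(HS.lam x) := by
    have : (HS.lam x K).toReal = ∫ α, K.indicator (fun _ => (1:ℝ)) α ∂(HS.lam x) := by
      rw [integral_indicator hKmeas]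
      simp [Measure.restrict_apply]
      rfl
    rw [this]
    refine integral_mono hind hintf fun α => ?_
    by_cases hα : α ∈ K
    · simp [Set.indicator_of_mem hα, hf1 hα]
    · simp only [Set.indicator_of_notMem hα]
      exact (hf01 α).1
  -- invariance
  have h2 : ∫ α, f α ∂(HS.lam x) = ∫ α, f (Gd.mul γ α) ∂(HS.lam y) := by
    have := HS.left_invariant γ f f.continuous hfc
    rw [hr, hs] at this
    exact this.symm
  -- a.e. bound of the transported integrand
  have hy : y ∈ Gd.units := by rw [← hs]; exact Gd.s_mem_units' γ
  have hae : ∀ᵐ α ∂(HS.lam y), Gd.r α = y := by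
    have := HS.supp_subset y hy
    exact this
  have h3 : ∫ α, f (Gd.mul γ α) ∂(HS.lam y) ≤ (HS.lam y (Gd.s ⁻¹' V)).toReal := by
    calc ∫ α, f (Gd.mul γ α) ∂(HS.lam y)
        ≤ ‖∫ α, f (Gd.mul γ α) ∂(HS.lam y)‖ := le_abs_self _
      _ ≤ (∫⁻ α, ENNReal.ofReal ‖f (Gd.mul γ α)‖ ∂(HS.lam y)).toReal :=
          norm_integral_le_lintegral_norm _
      _ ≤ (HS.lam y (Gd.s ⁻¹' V)).toReal := by
          refine ENNReal.toReal_mono hfin ?_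
          have hle : ∫⁻ α, ENNReal.ofReal ‖f (Gd.mul γ α)‖ ∂(HS.lam y)
              ≤ ∫⁻ α, (Gd.s ⁻¹' V).indicator (fun _ => (1:ℝ≥0∞)) α ∂(HS.lam y) := by
            refine lintegral_mono_ae (hae.mono fun α hα => ?_)
            by_cases hz : f (Gd.mul γ α) = 0
            · simp [hz]
            · have hmem : Gd.mul γ α ∈ Gd.s ⁻¹' V := by
                by_contra hmem
                exact hz (hf0 hmem)
              have hsm : Gd.s (Gd.mul γ α) = Gd.s α := Gd.s_mul γ α (by rw [hs, hα])
              have hαV : α ∈ Gd.s ⁻¹' V := by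
                simpa [Set.mem_preimage, hsm] using hmem
              rw [Set.indicator_of_mem hαV]
              have h1' := (hf01 (Gd.mul γ α)).2
              have h0' := (hf01 (Gd.mul γ α)).1
              rw [Real.norm_eq_abs, abs_of_nonneg h0']
              exact ENNReal.ofReal_le_one.mpr h1'
          refine hle.trans (le_of_eq ?_)
          exact lintegral_indicator_one (Gd.continuous_s.isOpen_preimage V hV).measurableSet
  -- λˣ K ≤ λʸ(s⁻¹V), contradiction with hKgt
  have hfinal : HS.lam x K ≤ HS.lam y (Gd.s ⁻¹' V) := by
    have h4 : (HS.lam x K).toReal ≤ (HS.lam y (Gd.s ⁻¹' V)).toReal := by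
      rw [h2] at h1; exact h1.trans h3
    exact (ENNReal.toReal_le_toReal hKfin hfin).mp h4
  exact absurd hfinal (not_le.mpr hKgt)

end HaarSystem

namespace HaarSystem

variable {G : Type*} [TopologicalSpace G] [T2Space G] [LocallyCompactSpace G]
  [MeasurableSpace G] [BorelSpace G]
  {Gd : TopGroupoid G} (HS : HaarSystem Gd)

lemma bound_of_nbhd (x : G) (hx : x ∈ Gd.units) (V : Set G) (hV : IsOpen V)
    (hfin : (⨆ y ∈ V ∩ Gd.units, HS.lam y (Gd.s ⁻¹' (V ∩ Gd.units))) < ⊤) :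
    HS.lam x (Gd.s ⁻¹' (V ∩ Gd.units)) ≤
      ⨆ y ∈ V ∩ Gd.units, HS.lam y (Gd.s ⁻¹' (V ∩ Gd.units)) := by
  set W := V ∩ Gd.units with hWdef
  set S := ⨆ y ∈ W, HS.lam y (Gd.s ⁻¹' W) with hSdef
  have hWV : ∀ u, u ∈ Gd.units → HS.lam u (Gd.s ⁻¹' W) = HS.lam u (Gd.s ⁻¹' V) := by
    intro u hu
    rw [HS.measure_eq_inter_fiber hu (Gd.s ⁻¹' W),
        HS.measure_eq_inter_fiber hu (Gd.s ⁻¹' V)]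
    congr 1
    ext γ
    simp only [Set.mem_inter_iff, Set.mem_preimage, Set.mem_singleton_iff, hWdef]
    exact ⟨fun ⟨⟨h1, _⟩, h2⟩ => ⟨h1, h2⟩,
      fun ⟨h1, h2⟩ => ⟨⟨h1, Gd.s_mem_units' γ⟩, h2⟩⟩
  by_cases h0 : HS.lam x (Gd.s ⁻¹' W) = 0
  · rw [h0]; exact zero_le
  · have hne : (Gd.s ⁻¹' W ∩ Gd.r ⁻¹' {x}).Nonempty := by
      apply nonempty_of_measure_ne_zero (μ := HS.lam x)
      rw [← HS.measure_eq_inter_fiber hx]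
      exact h0
    obtain ⟨γ₀, hγ₀W, hγ₀r⟩ := hne
    set y := Gd.s γ₀ with hydef
    have hyW : y ∈ W := hγ₀W
    have hyu : y ∈ Gd.units := Gd.s_mem_units' γ₀
    have hyS : HS.lam y (Gd.s ⁻¹' W) ≤ S := le_iSup₂ (f := fun y _ => HS.lam y (Gd.s ⁻¹' W)) y hyW
    have hySV : HS.lam y (Gd.s ⁻¹' V) ≤ S := by rw [← hWV y hyu]; exact hyS
    have hfin' : HS.lam y (Gd.s ⁻¹' V) ≠ ⊤ := (hySV.trans_lt hfin).ne
    have hkey := HS.measure_source_le γ₀ hγ₀r rfl V hV hfin'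
    calc HS.lam x (Gd.s ⁻¹' W) = HS.lam x (Gd.s ⁻¹' V) := hWV x hx
      _ ≤ HS.lam y (Gd.s ⁻¹' V) := hkey
      _ ≤ S := hySV

end HaarSystem

/-- `G` is integrable iff each unit `z` has an open neighborhood `U`
in `G⁰` with `sup_{x ∈ U} λˣ(s⁻¹ U) < ∞`. -/
theorem stmt2 {G : Type*} [TopologicalSpace G] [T2Space G] [LocallyCompactSpace G]
    [MeasurableSpace G] [BorelSpace G]
    (Gd : TopGroupoid G) (HS : HaarSystem Gd) :
    HS.Integrable ↔
      ∀ z ∈ Gd.units, ∃ U : Set G, IsOpen U ∧ z ∈ U ∧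
        (⨆ x ∈ U ∩ Gd.units, HS.lam x (Gd.s ⁻¹' (U ∩ Gd.units))) < ⊤ := by
  constructor
  · intro hInt z hz
    obtain ⟨K, hKc, hKn⟩ := exists_compact_mem_nhds z
    refine ⟨interior K, isOpen_interior, mem_interior_iff_mem_nhds.mpr hKn, ?_⟩
    set N := K ∩ Gd.units with hNdef
    have hN : IsCompact N := hKc.inter_right Gd.isClosed_units'
    have hB := hInt N Set.inter_subset_right hN
    refine lt_of_le_of_lt (iSup₂_le fun x hx => ?_) hB
    have hxN : x ∈ N := ⟨interior_subset hx.1, hx.2⟩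
    calc HS.lam x (Gd.s ⁻¹' (interior K ∩ Gd.units))
        ≤ HS.lam x (Gd.s ⁻¹' N) := by
          refine measure_mono (Set.preimage_mono ?_)
          exact Set.inter_subset_inter_left _ interior_subset
      _ ≤ ⨆ x ∈ N, HS.lam x (Gd.s ⁻¹' N) :=
          le_iSup₂ (f := fun x _ => HS.lam x (Gd.s ⁻¹' N)) x hxN
  · intro h N hNu hNc
    choose U hUopen hUmem hUfin using fun (z : G) (hz : z ∈ Gd.units) => h z hz
    obtain ⟨t, ht⟩ := hNc.elim_nhds_subcover' (fun x hx => U x (hNu hx))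
      (fun x hx => (hUopen x (hNu hx)).mem_nhds (hUmem x (hNu hx)))
    have hbound : ∀ x ∈ N, HS.lam x (Gd.s ⁻¹' N) ≤
        ∑ z ∈ t, ⨆ y ∈ U z.1 (hNu z.2) ∩ Gd.units,
          HS.lam y (Gd.s ⁻¹' (U z.1 (hNu z.2) ∩ Gd.units)) := by
      intro x hx
      have hsub : Gd.s ⁻¹' N ⊆ ⋃ z ∈ t, Gd.s ⁻¹' (U z.1 (hNu z.2) ∩ Gd.units) := by
        intro γ hγ
        have hsN : Gd.s γ ∈ N := hγ
        obtain ⟨z, hzmem⟩ := Set.mem_iUnion.mp (ht hsN)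
        simp only [Set.mem_iUnion] at hzmem
        obtain ⟨hzt, hzU⟩ := hzmem
        exact Set.mem_biUnion hzt ⟨hzU, Gd.s_mem_units' γ⟩
      calc HS.lam x (Gd.s ⁻¹' N)
          ≤ HS.lam x (⋃ z ∈ t, Gd.s ⁻¹' (U z.1 (hNu z.2) ∩ Gd.units)) := measure_mono hsub
        _ ≤ ∑ z ∈ t, HS.lam x (Gd.s ⁻¹' (U z.1 (hNu z.2) ∩ Gd.units)) :=
            measure_biUnion_finset_le t _
        _ ≤ _ := by
            refine Finset.sum_le_sum fun z hz => ?_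
            exact HS.bound_of_nbhd x (hNu hx) (U z.1 (hNu z.2)) (hUopen z.1 (hNu z.2))
              (hUfin z.1 (hNu z.2))
    refine lt_of_le_of_lt (iSup₂_le hbound) ?_
    exact ENNReal.sum_lt_top.mpr fun z _ => hUfin z.1 (hNu z.2)
end

section
/- Let G be a second countable locally compact Hausdorff principal integrable groupoid with left Haar system, let u ∈ G⁰ and f ∈ C_c(G). Then the kernel k_f(γ,α) = f(γα⁻¹) belongs to L²(G × G, λ_u × λ_u), and ‖k_f‖² ≤ ‖f‖_∞² · M · N, where M = sup{λ_x(supp f) : x ∈ s(supp f)} and N = sup{λ_x(r⁻¹(s(supp f))) : x ∈ G⁰}, both finite and independent of u. -/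
open MeasureTheory Filter Topology ENNReal Classical

set_option linter.unusedSectionVars false

section StmtAux

open MeasureTheory

variable {G : Type*} [TopologicalSpace G] [T2Space G] [LocallyCompactSpace G]
  [SecondCountableTopology G] [MeasurableSpace G] [BorelSpace G]
  {Gd : TopGroupoid G} (HS : HaarSystem Gd)

lemma gpd_preimage_inv (E : Set G) : Gd.inv ⁻¹' E = Gd.inv '' E := by
  ext γ
  constructor
  · intro h; exact ⟨Gd.inv γ, h, Gd.inv_inv' γ⟩
  · rintro ⟨δ, hδ, rfl⟩
    show Gd.inv (Gd.inv δ) ∈ E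
    rw [Gd.inv_inv']; exact hδ

lemma gpd_r_mem_units (γ : G) : Gd.r γ ∈ Gd.units := ⟨γ, rfl⟩

lemma gpd_s_mem_units (γ : G) : Gd.s γ ∈ Gd.units := ⟨Gd.inv γ, Gd.r_inv γ⟩

lemma gpd_contOn_mul_left (γ₀ : G) :
    ContinuousOn (fun δ => Gd.mul γ₀ δ) {δ : G | Gd.s γ₀ = Gd.r δ} := by
  have h : ContinuousOn (fun p : G × G => Gd.mul p.1 p.2) {p : G × G | Gd.s p.1 = Gd.r p.2} :=
    Gd.continuous_mul
  exact h.comp ((continuous_const.prodMk continuous_id).continuousOn) (fun δ hδ => hδ)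

lemma gpd_contOn_mul_right (α : G) :
    ContinuousOn (fun δ => Gd.mul δ α) {δ : G | Gd.s δ = Gd.r α} := by
  have h : ContinuousOn (fun p : G × G => Gd.mul p.1 p.2) {p : G × G | Gd.s p.1 = Gd.r p.2} :=
    Gd.continuous_mul
  exact h.comp ((continuous_id.prodMk continuous_const).continuousOn) (fun δ hδ => hδ)

lemma hs_rlam_apply (x : G) {E : Set G} (hE : MeasurableSet E) :
    HS.rlam x E = HS.lam x (Gd.inv ⁻¹' E) :=
  MeasureTheory.Measure.map_apply Gd.continuous_inv.measurable hE

lemma hs_ae_r_eq {x : G} (hx : x ∈ Gd.units) : ∀ᵐ γ ∂HS.lam x, Gd.r γ = x := by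
  rw [MeasureTheory.ae_iff]
  exact HS.supp_subset x hx

/-- The key transfer estimate coming from left invariance: for a compact set `C`
contained in the fiber `r⁻¹{r γ₀}`, we have `λ^{r γ₀}(C) ≤ λ^{s γ₀}(γ₀⁻¹ C)`. -/
lemma hs_transfer (γ₀ : G) {C : Set G} (hC : IsCompact C)
    (hCr : ∀ δ ∈ C, Gd.r δ = Gd.r γ₀) :
    HS.lam (Gd.r γ₀) C ≤ HS.lam (Gd.s γ₀) ((fun δ => Gd.mul (Gd.inv γ₀) δ) '' C) := by
  classical
  set ψ : G → G := fun δ => Gd.mul (Gd.inv γ₀) δ with hψdef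
  have hFc : IsClosed {δ : G | Gd.r δ = Gd.r γ₀} := isClosed_eq Gd.continuous_r continuous_const
  have hψcont : ContinuousOn ψ {δ : G | Gd.r δ = Gd.r γ₀} := by
    refine (gpd_contOn_mul_left (Gd.inv γ₀)).mono fun δ hδ => ?_
    show Gd.s (Gd.inv γ₀) = Gd.r δ
    rw [Gd.s_inv]; exact hδ.symm
  have hD : IsCompact (ψ '' C) := hC.image_of_continuousOn (hψcont.mono fun δ hδ => hCr δ hδ)
  haveI hregν : (HS.lam (Gd.s γ₀)).Regular := HS.regular _
  haveI hregμ : (HS.lam (Gd.r γ₀)).Regular := HS.regular _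
  by_contra hlt
  push_neg at hlt
  obtain ⟨U, hDU, hUopen, hUlt⟩ := Set.exists_isOpen_lt_of_lt (ψ '' C) _ hlt
  obtain ⟨g, hg1, hg0, hgsupp, hgicc⟩ :=
    exists_continuous_one_zero_of_isCompact hD hUopen.isClosed_compl
      (Set.disjoint_left.mpr fun x hx hxc => hxc (hDU hx))
  set μ := HS.lam (Gd.r γ₀) with hμdef
  set ν := HS.lam (Gd.s γ₀) with hνdef
  have hae : ∀ᵐ δ ∂μ, Gd.r δ = Gd.r γ₀ := hs_ae_r_eq HS ⟨γ₀, rfl⟩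
  have haem : AEMeasurable (fun δ => (g : G → ℝ) (ψ δ)) μ := by
    have h1 : AEMeasurable (fun δ => (g : G → ℝ) (ψ δ))
        (μ.restrict {δ : G | Gd.r δ = Gd.r γ₀}) :=
      ((g.continuous.comp_continuousOn hψcont).aemeasurable hFc.measurableSet)
    rwa [MeasureTheory.Measure.restrict_eq_self_of_ae_mem (s := {δ : G | Gd.r δ = Gd.r γ₀}) hae] at h1
  set Q := (fun δ => Gd.mul γ₀ δ) '' (tsupport (g : G → ℝ) ∩ {δ : G | Gd.r δ = Gd.s γ₀})
    with hQdef
  have hQc : IsCompact Q := by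
    refine (IsCompact.inter_right hgsupp
      (isClosed_eq Gd.continuous_r continuous_const)).image_of_continuousOn ?_
    refine (gpd_contOn_mul_left γ₀).mono fun δ hδ => ?_
    exact hδ.2.symm
  have hQmeas : MeasurableSet Q := hQc.isClosed.measurableSet
  have hQmem : ∀ δ : G, Gd.r δ = Gd.r γ₀ → (g : G → ℝ) (ψ δ) ≠ 0 → δ ∈ Q := by
    intro δ hδ hne
    have hcomp : Gd.s (Gd.inv γ₀) = Gd.r δ := by rw [Gd.s_inv, hδ]
    have h2 : Gd.r (ψ δ) = Gd.s γ₀ := by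
      show Gd.r (Gd.mul (Gd.inv γ₀) δ) = Gd.s γ₀
      rw [Gd.r_mul _ _ hcomp, Gd.r_inv]
    refine ⟨ψ δ, ⟨subset_tsupport _ hne, h2⟩, ?_⟩
    show Gd.mul γ₀ (Gd.mul (Gd.inv γ₀) δ) = δ
    rw [← Gd.mul_assoc' γ₀ (Gd.inv γ₀) δ (Gd.r_inv γ₀).symm hcomp, Gd.mul_inv', ← hδ,
      Gd.unit_mul]
  have hInt : MeasureTheory.Integrable (fun δ => (g : G → ℝ) (ψ δ)) μ := by
    refine MeasureTheory.Integrable.mono' (g := Q.indicator fun _ => (1 : ℝ)) ?_ haem.aestronglyMeasurable ?_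
    · exact (MeasureTheory.integrable_indicator_iff hQmeas).2
        (MeasureTheory.integrableOn_const hQc.measure_lt_top.ne (by simp))
    · refine hae.mono fun δ hδ => ?_
      by_cases h0 : (g : G → ℝ) (ψ δ) = 0
      · rw [h0, norm_zero]
        exact Set.indicator_apply_nonneg fun _ => zero_le_one
      · rw [Set.indicator_of_mem (hQmem δ hδ h0), Real.norm_eq_abs, abs_le]
        exact ⟨by linarith [(hgicc (ψ δ)).1], (hgicc (ψ δ)).2⟩
  have key : μ C ≤ ν U := by
    have h2 : μ C ≤ ∫⁻ δ, ENNReal.ofReal ((g : G → ℝ) (ψ δ)) ∂μ := by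
      rw [← MeasureTheory.lintegral_indicator_one hC.isClosed.measurableSet]
      refine MeasureTheory.lintegral_mono fun δ => ?_
      by_cases hδC : δ ∈ C
      · rw [Set.indicator_of_mem hδC]
        have h1' : (g : G → ℝ) (ψ δ) = 1 := hg1 (Set.mem_image_of_mem ψ hδC)
        rw [h1']
        simp
      · rw [Set.indicator_of_notMem hδC]
        exact zero_le
    have h3 : (∫⁻ δ, ENNReal.ofReal ((g : G → ℝ) (ψ δ)) ∂μ)
        = ENNReal.ofReal (∫ δ, (g : G → ℝ) (ψ δ) ∂μ) :=
      (MeasureTheory.ofReal_integral_eq_lintegral_ofReal hInt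
        (Filter.Eventually.of_forall fun δ => (hgicc (ψ δ)).1)).symm
    have h4 : (∫ δ, (g : G → ℝ) (ψ δ) ∂μ) = ∫ y, (g : G → ℝ) y ∂ν := by
      have h := HS.left_invariant (Gd.inv γ₀) (g : G → ℝ) g.continuous hgsupp
      rw [Gd.s_inv, Gd.r_inv] at h
      exact h
    have hIntg : MeasureTheory.Integrable (g : G → ℝ) ν :=
      g.continuous.integrable_of_hasCompactSupport hgsupp
    have h5 : ENNReal.ofReal (∫ y, (g : G → ℝ) y ∂ν) ≤ ν U := by
      rw [MeasureTheory.ofReal_integral_eq_lintegral_ofReal hIntg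
        (Filter.Eventually.of_forall fun y => (hgicc y).1),
        ← MeasureTheory.lintegral_indicator_one hUopen.measurableSet]
      refine MeasureTheory.lintegral_mono fun y => ?_
      by_cases hy : y ∈ U
      · rw [Set.indicator_of_mem hy]
        exact ENNReal.ofReal_le_one.mpr (hgicc y).2
      · rw [Set.indicator_of_notMem hy]
        have h0' : (g : G → ℝ) y = 0 := hg0 hy
        simp [h0']
    calc μ C ≤ ∫⁻ δ, ENNReal.ofReal ((g : G → ℝ) (ψ δ)) ∂μ := h2
      _ = ENNReal.ofReal (∫ δ, (g : G → ℝ) (ψ δ) ∂μ) := h3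
      _ = ENNReal.ofReal (∫ y, (g : G → ℝ) y ∂ν) := by rw [h4]
      _ ≤ ν U := h5
  exact absurd key (not_le.mpr hUlt)

/-- Uniform bound on `λˣ(s⁻¹ S)` over all units `x`, given a bound at points of `S`. -/
lemma hs_lam_sinv_le {x : G} (hx : x ∈ Gd.units) {S : Set G} (hScl : IsClosed S)
    {c : ℝ≥0∞} (hc : ∀ y ∈ S, HS.lam y (Gd.s ⁻¹' S) ≤ c) :
    HS.lam x (Gd.s ⁻¹' S) ≤ c := by
  have hEc : IsClosed (Gd.s ⁻¹' S) := hScl.preimage Gd.continuous_s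
  set Kex := CompactExhaustion.choice G with hKexdef
  have hcov : Gd.s ⁻¹' S = ⋃ n, (Gd.s ⁻¹' S ∩ Kex n) := by
    rw [← Set.inter_iUnion, Kex.iUnion_eq, Set.inter_univ]
  have hmono : Monotone fun n => Gd.s ⁻¹' S ∩ Kex n :=
    fun m n h => Set.inter_subset_inter_right _ (Kex.subset h)
  rw [hcov, hmono.measure_iUnion]
  refine iSup_le fun n => ?_
  have hFcl : IsClosed {γ : G | Gd.r γ = x} := isClosed_eq Gd.continuous_r continuous_const
  set Q := (Gd.s ⁻¹' S ∩ Kex n) ∩ {γ : G | Gd.r γ = x} with hQdef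
  have hQc : IsCompact Q := ((Kex.isCompact n).inter_left hEc).inter_right hFcl
  have hsplit : HS.lam x (Gd.s ⁻¹' S ∩ Kex n) ≤ HS.lam x Q + HS.lam x {γ : G | Gd.r γ ≠ x} := by
    refine le_trans (MeasureTheory.measure_mono fun γ hγ => ?_)
      (MeasureTheory.measure_union_le _ _)
    by_cases h : Gd.r γ = x
    · exact Or.inl ⟨hγ, h⟩
    · exact Or.inr h
  rw [HS.supp_subset x hx, add_zero] at hsplit
  refine hsplit.trans ?_
  rcases Q.eq_empty_or_nonempty with hQe | ⟨γ₀, hγ₀⟩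
  · rw [hQe]; simp
  · have hrγ₀ : Gd.r γ₀ = x := hγ₀.2
    have htr := hs_transfer HS γ₀ hQc (fun δ hδ => by rw [hδ.2, hrγ₀])
    rw [hrγ₀] at htr
    refine htr.trans (le_trans (MeasureTheory.measure_mono ?_) (hc _ hγ₀.1.1))
    rintro _ ⟨δ, hδ, rfl⟩
    have hcomp : Gd.s (Gd.inv γ₀) = Gd.r δ := by rw [Gd.s_inv, hrγ₀, hδ.2]
    show Gd.s (Gd.mul (Gd.inv γ₀) δ) ∈ S
    rw [Gd.s_mul _ _ hcomp]
    exact hδ.1.1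

end StmtAux

/-- for `u ∈ G⁰` and `f ∈ C_c(G)`, the kernel `k_f(γ,α) = f(γα⁻¹)`
(defined to be `0` on non-composable pairs) lies in `L²(G × G, λ_u × λ_u)`, with
`‖k_f‖² ≤ ‖f‖∞² · M · N` where `M = sup{λ_x(supp f) : x ∈ s(supp f)}` and
`N = sup{λ_x(r⁻¹(s(supp f))) : x ∈ G⁰}` are finite and independent of `u`. -/
theorem stmt15 {G : Type*} [TopologicalSpace G] [T2Space G] [LocallyCompactSpace G]
    [SecondCountableTopology G] [MeasurableSpace G] [BorelSpace G]
    (Gd : TopGroupoid G) (HS : HaarSystem Gd) (hpr : Gd.Principal)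
    (hint : HS.Integrable)
    (u : G) (hu : u ∈ Gd.units)
    (f : G → ℝ) (hf_cont : Continuous f) (hf_supp : HasCompactSupport f)
    (k : G × G → ℝ)
    (hk : ∀ p : G × G,
      k p = if Gd.s p.1 = Gd.s p.2 then f (Gd.mul p.1 (Gd.inv p.2)) else 0) :
    (⨆ x ∈ Gd.s '' tsupport f, HS.rlam x (tsupport f)) < ⊤ ∧
    (⨆ x ∈ Gd.units, HS.rlam x (Gd.r ⁻¹' (Gd.s '' tsupport f))) < ⊤ ∧
    MemLp k 2 ((HS.rlam u).prod (HS.rlam u)) ∧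
    (∫⁻ p, (‖k p‖₊ : ℝ≥0∞) ^ 2 ∂((HS.rlam u).prod (HS.rlam u)))
      ≤ (⨆ γ : G, (‖f γ‖₊ : ℝ≥0∞)) ^ 2
        * (⨆ x ∈ Gd.s '' tsupport f, HS.rlam x (tsupport f))
        * (⨆ x ∈ Gd.units, HS.rlam x (Gd.r ⁻¹' (Gd.s '' tsupport f))) := by
  classical
  set K : Set G := tsupport f with hKdef
  have hKcomp : IsCompact K := hf_supp
  have hKcl : IsClosed K := isClosed_tsupport f
  set S : Set G := Gd.s '' K with hSdef
  have hScomp : IsCompact S := hKcomp.image Gd.continuous_s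
  have hScl : IsClosed S := hScomp.isClosed
  set N₀ : Set G := S ∪ Gd.r '' K with hN₀def
  have hN₀comp : IsCompact N₀ := hScomp.union (hKcomp.image Gd.continuous_r)
  have hN₀units : N₀ ⊆ Gd.units := by
    rintro x (⟨γ, _, rfl⟩ | ⟨γ, _, rfl⟩)
    exacts [gpd_s_mem_units γ, gpd_r_mem_units γ]
  have hCmax : (⨆ x ∈ N₀, HS.lam x (Gd.s ⁻¹' N₀)) < ⊤ := hint N₀ hN₀units hN₀comp
  -- Part 1
  have hM_le : (⨆ x ∈ S, HS.rlam x K) ≤ ⨆ x ∈ N₀, HS.lam x (Gd.s ⁻¹' N₀) := by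
    refine iSup₂_le fun x hx => ?_
    rw [hs_rlam_apply HS x hKcl.measurableSet]
    refine le_trans (MeasureTheory.measure_mono ?_)
      (le_biSup (fun x => HS.lam x (Gd.s ⁻¹' N₀)) (Or.inl hx))
    intro γ hγ
    show Gd.s γ ∈ N₀
    exact Or.inr ⟨Gd.inv γ, hγ, Gd.r_inv γ⟩
  have part1 : (⨆ x ∈ S, HS.rlam x K) < ⊤ := lt_of_le_of_lt hM_le hCmax
  -- Part 2
  have hsinv_eq : Gd.inv ⁻¹' (Gd.r ⁻¹' S) = Gd.s ⁻¹' S := by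
    ext γ
    show Gd.r (Gd.inv γ) ∈ S ↔ Gd.s γ ∈ S
    rw [Gd.r_inv]
  have hrS_meas : MeasurableSet (Gd.r ⁻¹' S) := (hScl.preimage Gd.continuous_r).measurableSet
  have part2le : (⨆ x ∈ Gd.units, HS.rlam x (Gd.r ⁻¹' S))
      ≤ ⨆ x ∈ N₀, HS.lam x (Gd.s ⁻¹' N₀) := by
    refine iSup₂_le fun x hx => ?_
    rw [hs_rlam_apply HS x hrS_meas, hsinv_eq]
    refine hs_lam_sinv_le HS hx hScl fun y hy => ?_
    refine le_trans (MeasureTheory.measure_mono (Set.preimage_mono (show S ⊆ N₀ from Set.subset_union_left))) ?_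
    exact le_biSup (fun x => HS.lam x (Gd.s ⁻¹' N₀)) (Or.inl hy)
  have part2 : (⨆ x ∈ Gd.units, HS.rlam x (Gd.r ⁻¹' S)) < ⊤ := lt_of_le_of_lt part2le hCmax
  -- bound on f
  set b : ℝ≥0∞ := ⨆ γ : G, (‖f γ‖₊ : ℝ≥0∞) with hbdef
  have hb_top : b < ⊤ := by
    obtain ⟨Cb, hCb⟩ := hf_cont.bounded_above_of_compact_support hf_supp
    have hle : b ≤ ENNReal.ofReal Cb := by
      refine iSup_le fun γ => ?_
      rw [← ENNReal.ofReal_coe_nnreal, coe_nnnorm]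
      exact ENNReal.ofReal_le_ofReal (hCb γ)
    exact lt_of_le_of_lt hle ENNReal.ofReal_lt_top
  -- measurability of k
  set Cset : Set (G × G) := {p : G × G | Gd.s p.1 = Gd.s p.2} with hCsetdef
  have hCcl : IsClosed Cset :=
    isClosed_eq (Gd.continuous_s.comp continuous_fst) (Gd.continuous_s.comp continuous_snd)
  have hF₀cont : ContinuousOn (fun p : G × G => f (Gd.mul p.1 (Gd.inv p.2))) Cset := by
    refine hf_cont.comp_continuousOn ?_
    have h : ContinuousOn (fun p : G × G => Gd.mul p.1 p.2) {p : G × G | Gd.s p.1 = Gd.r p.2} :=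
      Gd.continuous_mul
    refine h.comp ((continuous_fst.prodMk (Gd.continuous_inv.comp continuous_snd)).continuousOn)
      fun p hp => ?_
    show Gd.s p.1 = Gd.r (Gd.inv p.2)
    rw [Gd.r_inv]
    exact hp
  have hk_eq : k = Cset.indicator (fun p : G × G => f (Gd.mul p.1 (Gd.inv p.2))) := by
    funext p
    by_cases hp : Gd.s p.1 = Gd.s p.2
    · rw [hk p, if_pos hp, Set.indicator_of_mem (show p ∈ Cset from hp)]
    · rw [hk p, if_neg hp, Set.indicator_of_notMem (show p ∉ Cset from hp)]
  have hkaem : AEMeasurable k ((HS.rlam u).prod (HS.rlam u)) := by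
    rw [hk_eq]
    exact (aemeasurable_indicator_iff hCcl.measurableSet).2
      (hF₀cont.aemeasurable hCcl.measurableSet)
  have hg2aem : AEMeasurable (fun p : G × G => (‖k p‖₊ : ℝ≥0∞) ^ 2)
      ((HS.rlam u).prod (HS.rlam u)) := hkaem.enorm.pow_const 2
  -- s-finiteness
  haveI : MeasureTheory.IsFiniteMeasureOnCompacts (HS.rlam u) := by
    constructor
    intro Kc hKc
    rw [hs_rlam_apply HS u hKc.isClosed.measurableSet, gpd_preimage_inv]
    haveI := HS.regular u
    exact (hKc.image Gd.continuous_inv).measure_lt_top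
  -- a.e. source fiber
  have hae_s : ∀ᵐ α ∂HS.rlam u, Gd.s α = u := by
    have hmeas : MeasurableSet {α : G | Gd.s α ≠ u} :=
      (isClosed_eq Gd.continuous_s continuous_const).measurableSet.compl
    have h0 : HS.rlam u {α : G | Gd.s α ≠ u} = 0 := by
      rw [hs_rlam_apply HS u hmeas]
      have heq : Gd.inv ⁻¹' {α : G | Gd.s α ≠ u} = {β : G | Gd.r β ≠ u} := by
        ext β
        show Gd.s (Gd.inv β) ≠ u ↔ Gd.r β ≠ u
        rw [Gd.s_inv]
      rw [heq]
      exact HS.supp_subset u hu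
    rw [MeasureTheory.ae_iff]
    exact h0
  -- the key fiberwise estimate
  have key : ∀ α : G, Gd.s α = u →
      (∫⁻ γ, (‖k (γ, α)‖₊ : ℝ≥0∞) ^ 2 ∂HS.rlam u)
        ≤ b ^ 2 * (⨆ x ∈ S, HS.rlam x K)
          * (Gd.r ⁻¹' S).indicator (fun _ => (1 : ℝ≥0∞)) α := by
    intro α hα
    set W : Set G := {γ : G | Gd.s γ = Gd.s α} ∩ (fun γ => Gd.mul γ (Gd.inv α)) ⁻¹' K
      with hWdef
    have hWcl : IsClosed W := by
      have hA : IsClosed {γ : G | Gd.s γ = Gd.s α} := isClosed_eq Gd.continuous_s continuous_const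
      have hφ : ContinuousOn (fun γ => Gd.mul γ (Gd.inv α)) {γ : G | Gd.s γ = Gd.s α} := by
        refine (gpd_contOn_mul_right (Gd.inv α)).mono fun γ hγ => ?_
        show Gd.s γ = Gd.r (Gd.inv α)
        rw [Gd.r_inv]
        exact hγ
      exact hφ.preimage_isClosed_of_isClosed hA hKcl
    have hWmeas : MeasurableSet W := hWcl.measurableSet
    have hpt : ∀ γ : G, (‖k (γ, α)‖₊ : ℝ≥0∞) ^ 2
        ≤ b ^ 2 * W.indicator (fun _ => (1 : ℝ≥0∞)) γ := by
      intro γ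
      by_cases hsγ : Gd.s γ = Gd.s α
      · by_cases hmem : Gd.mul γ (Gd.inv α) ∈ K
        · have hγW : γ ∈ W := ⟨hsγ, hmem⟩
          rw [Set.indicator_of_mem hγW, mul_one, hk (γ, α)]
          rw [if_pos hsγ]
          exact pow_le_pow_left' (le_iSup (fun γ' : G => (‖f γ'‖₊ : ℝ≥0∞)) _) 2
        · have h0 : f (Gd.mul γ (Gd.inv α)) = 0 := image_eq_zero_of_notMem_tsupport hmem
          rw [hk (γ, α)]
          rw [if_pos hsγ, h0]
          simp
      · rw [hk (γ, α), if_neg hsγ]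
        simp
    have h1 : (∫⁻ γ, (‖k (γ, α)‖₊ : ℝ≥0∞) ^ 2 ∂HS.rlam u) ≤ b ^ 2 * HS.rlam u W := by
      calc (∫⁻ γ, (‖k (γ, α)‖₊ : ℝ≥0∞) ^ 2 ∂HS.rlam u)
          ≤ ∫⁻ γ, b ^ 2 * W.indicator (fun _ => (1 : ℝ≥0∞)) γ ∂HS.rlam u :=
            MeasureTheory.lintegral_mono hpt
        _ = b ^ 2 * ∫⁻ γ, W.indicator (fun _ => (1 : ℝ≥0∞)) γ ∂HS.rlam u :=
            MeasureTheory.lintegral_const_mul _ (measurable_const.indicator hWmeas)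
        _ = b ^ 2 * (1 * HS.rlam u W) := by rw [MeasureTheory.lintegral_indicator_const hWmeas]
        _ = b ^ 2 * HS.rlam u W := by rw [one_mul]
    by_cases hrα : Gd.r α ∈ S
    · rw [Set.indicator_of_mem (show α ∈ Gd.r ⁻¹' S from hrα), mul_one]
      refine h1.trans (mul_le_mul_right ?_ _)
      -- bound rlam u W by M
      set W' : Set G := (fun δ => Gd.mul δ α) '' (K ∩ Gd.s ⁻¹' {Gd.r α}) with hW'def
      have hW'comp : IsCompact W' := by
        refine (hKcomp.inter_right (isClosed_singleton.preimage Gd.continuous_s)).image_of_continuousOn ?_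
        exact (gpd_contOn_mul_right α).mono fun δ hδ => hδ.2
      have hW'meas : MeasurableSet W' := hW'comp.isClosed.measurableSet
      have hWW' : W ⊆ W' := by
        rintro γ ⟨hγs, hγK⟩
        have hcomp1 : Gd.s γ = Gd.r (Gd.inv α) := by rw [Gd.r_inv]; exact hγs
        have hsδ : Gd.s (Gd.mul γ (Gd.inv α)) = Gd.r α := by
          rw [Gd.s_mul _ _ hcomp1, Gd.s_inv]
        refine ⟨Gd.mul γ (Gd.inv α), ⟨hγK, hsδ⟩, ?_⟩
        show Gd.mul (Gd.mul γ (Gd.inv α)) α = γ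
        rw [Gd.mul_assoc' γ (Gd.inv α) α hcomp1 (Gd.s_inv α), Gd.inv_mul', ← hγs, Gd.mul_unit]
      have h3 : HS.rlam u W' = HS.lam u (Gd.inv '' W') := by
        rw [hs_rlam_apply HS u hW'meas, gpd_preimage_inv]
      have hC'comp : IsCompact (Gd.inv '' W') := hW'comp.image Gd.continuous_inv
      have hC'r : ∀ δ ∈ Gd.inv '' W', Gd.r δ = Gd.r (Gd.inv α) := by
        rintro _ ⟨_, ⟨δ', hδ', rfl⟩, rfl⟩
        show Gd.r (Gd.inv (Gd.mul δ' α)) = Gd.r (Gd.inv α)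
        rw [Gd.r_inv, Gd.r_inv, Gd.s_mul _ _ hδ'.2]
      have htr := hs_transfer HS (Gd.inv α) hC'comp hC'r
      have hrinvα : Gd.r (Gd.inv α) = u := by rw [Gd.r_inv]; exact hα
      have hsinvα : Gd.s (Gd.inv α) = Gd.r α := Gd.s_inv α
      rw [hrinvα, hsinvα] at htr
      have himg : (fun δ => Gd.mul (Gd.inv (Gd.inv α)) δ) '' (Gd.inv '' W') ⊆ Gd.inv '' K := by
        rintro _ ⟨_, ⟨_, ⟨δ', hδ', rfl⟩, rfl⟩, rfl⟩
        refine ⟨δ', hδ'.1, ?_⟩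
        show Gd.inv δ' = Gd.mul (Gd.inv (Gd.inv α)) (Gd.inv (Gd.mul δ' α))
        rw [Gd.inv_inv']
        have hδs : Gd.s δ' = Gd.r α := hδ'.2
        have hcomp2 : Gd.s α = Gd.r (Gd.inv (Gd.mul δ' α)) := by
          rw [Gd.r_inv, Gd.s_mul _ _ hδs]
        have h₁ : Gd.r (Gd.inv δ') = Gd.r (Gd.mul α (Gd.inv (Gd.mul δ' α))) := by
          rw [Gd.r_inv, Gd.r_mul _ _ hcomp2]
          exact hδs
        have h₂ : Gd.s (Gd.inv δ') = Gd.s (Gd.mul α (Gd.inv (Gd.mul δ' α))) := by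
          rw [Gd.s_inv, Gd.s_mul _ _ hcomp2, Gd.s_inv, Gd.r_mul _ _ hδs]
        exact hpr (Prod.ext h₁ h₂)
      have h5 : HS.lam (Gd.r α) (Gd.inv '' K) = HS.rlam (Gd.r α) K := by
        rw [hs_rlam_apply HS _ hKcl.measurableSet, gpd_preimage_inv]
      calc HS.rlam u W ≤ HS.rlam u W' := MeasureTheory.measure_mono hWW'
        _ = HS.lam u (Gd.inv '' W') := h3
        _ ≤ HS.lam (Gd.r α) ((fun δ => Gd.mul (Gd.inv (Gd.inv α)) δ) '' (Gd.inv '' W')) := htr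
        _ ≤ HS.lam (Gd.r α) (Gd.inv '' K) := MeasureTheory.measure_mono himg
        _ = HS.rlam (Gd.r α) K := h5
        _ ≤ ⨆ x ∈ S, HS.rlam x K := le_biSup (fun x => HS.rlam x K) hrα
    · have hWempty : W = ∅ := by
        rw [Set.eq_empty_iff_forall_notMem]
        rintro γ ⟨hγs, hγK⟩
        apply hrα
        have hcomp1 : Gd.s γ = Gd.r (Gd.inv α) := by rw [Gd.r_inv]; exact hγs
        have hsδ : Gd.s (Gd.mul γ (Gd.inv α)) = Gd.r α := by
          rw [Gd.s_mul _ _ hcomp1, Gd.s_inv]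
        exact ⟨Gd.mul γ (Gd.inv α), hγK, hsδ⟩
      rw [Set.indicator_of_notMem (show α ∉ Gd.r ⁻¹' S from hrα)]
      refine le_trans h1 ?_
      rw [hWempty]
      simp
  -- Part 4
  have part4 : (∫⁻ p, (‖k p‖₊ : ℝ≥0∞) ^ 2 ∂((HS.rlam u).prod (HS.rlam u)))
      ≤ b ^ 2 * (⨆ x ∈ S, HS.rlam x K) * (⨆ x ∈ Gd.units, HS.rlam x (Gd.r ⁻¹' S)) := by
    rw [MeasureTheory.lintegral_prod_symm _ hg2aem]
    calc (∫⁻ α, ∫⁻ γ, (‖k (γ, α)‖₊ : ℝ≥0∞) ^ 2 ∂HS.rlam u ∂HS.rlam u)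
        ≤ ∫⁻ α, b ^ 2 * (⨆ x ∈ S, HS.rlam x K)
            * (Gd.r ⁻¹' S).indicator (fun _ => (1 : ℝ≥0∞)) α ∂HS.rlam u :=
          MeasureTheory.lintegral_mono_ae (hae_s.mono fun α hα => key α hα)
      _ = b ^ 2 * (⨆ x ∈ S, HS.rlam x K) * HS.rlam u (Gd.r ⁻¹' S) := by
          rw [MeasureTheory.lintegral_const_mul _ (measurable_const.indicator hrS_meas),
            MeasureTheory.lintegral_indicator_const hrS_meas, one_mul]
      _ ≤ _ := mul_le_mul_right (le_biSup (fun x => HS.rlam x (Gd.r ⁻¹' S)) hu) _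
  -- Part 3
  have hfin : (∫⁻ p, (‖k p‖₊ : ℝ≥0∞) ^ 2 ∂((HS.rlam u).prod (HS.rlam u))) < ⊤ :=
    lt_of_le_of_lt part4
      (ENNReal.mul_lt_top (ENNReal.mul_lt_top (ENNReal.pow_lt_top hb_top) part1) part2)
  have part3 : MeasureTheory.MemLp k 2 ((HS.rlam u).prod (HS.rlam u)) := by
    refine ⟨hkaem.aestronglyMeasurable, ?_⟩
    rw [MeasureTheory.eLpNorm_eq_lintegral_rpow_enorm two_ne_zero ENNReal.ofNat_ne_top]
    refine ENNReal.rpow_lt_top_of_nonneg (by norm_num) ?_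
    have heq : (∫⁻ p, (‖k p‖₊ : ℝ≥0∞) ^ (2 : ℝ≥0∞).toReal ∂((HS.rlam u).prod (HS.rlam u)))
        = ∫⁻ p, (‖k p‖₊ : ℝ≥0∞) ^ 2 ∂((HS.rlam u).prod (HS.rlam u)) := by
      refine MeasureTheory.lintegral_congr fun p => ?_
      rw [ENNReal.toReal_ofNat, show ((2 : ℝ) = ((2 : ℕ) : ℝ)) by norm_num,
        ENNReal.rpow_natCast]
    change (∫⁻ p, (‖k p‖₊ : ℝ≥0∞) ^ (2 : ℝ≥0∞).toReal ∂((HS.rlam u).prod (HS.rlam u))) ≠ ⊤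
    rw [heq]
    exact hfin.ne
  exact ⟨part1, part2, part3, part4⟩
end
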